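/- Let ν₁ and ν₂ be Borel probability measures on ℝ with supports bounded from above. If ν₁ ≻ ν₂, meaning ∫ h dν₁ ≥ ∫ h dν₂ for every bounded increasing function h : ℝ → ℝ, then P(ν₁)(t) ≥ P(ν₂)(t) for all t ∈ [0,1). -/

import Mathlib

open MeasureTheory Set Filter Topology

/-- The stochastic order `ν₁ ≻ ν₂` on Borel measures on `ℝ`:
`∫ h dν₂ ≤ ∫ h dν₁` for every bounded increasing function `h`.
`StochLE ν₂ ν₁` means `ν₂ ≺ ν₁`. -/
def StochLE (ν₂ ν₁ : Measure ℝ) : Prop :=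
  ∀ h : ℝ → ℝ, Monotone h → (∃ C : ℝ, ∀ x, |h x| ≤ C) →
    ∫ x, h x ∂ν₂ ≤ ∫ x, h x ∂ν₁

noncomputable def Fstar (ν : Measure ℝ) (t : ℝ) : ℝ :=
  sSup {x : ℝ | t < (ν (Ioi x)).toReal}

/-- `P(ν)(t) = ∫₀ᵗ F_ν*(s) ds`. -/
noncomputable def Pfun (ν : Measure ℝ) (t : ℝ) : ℝ :=
  ∫ s in Ioc (0:ℝ) t, Fstar ν s

/-- The maximal value of the polygon `P(ν)` over `[0,1]`
    (taken as the supremum over `t ∈ [0,1)`). -/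
noncomputable def Pmax (ν : Measure ℝ) : ℝ :=
  ⨆ t ∈ Ico (0:ℝ) 1, Pfun ν t

/-- Stochastic order implies pointwise comparison of survival functions. -/
lemma surv_le (ν₁ ν₂ : Measure ℝ) (hord : StochLE ν₂ ν₁) (x : ℝ) :
    (ν₂ (Ioi x)).toReal ≤ (ν₁ (Ioi x)).toReal := by
  have hmono : Monotone ((Ioi x).indicator (1 : ℝ → ℝ)) := by
    intro a b hab
    by_cases ha : a ∈ Ioi x
    · have hb : b ∈ Ioi x := lt_of_lt_of_le ha hab
      simp [indicator_of_mem ha, indicator_of_mem hb]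
    · rw [indicator_of_notMem ha]
      exact indicator_nonneg (fun _ _ => zero_le_one) b
  have hbd : ∃ C : ℝ, ∀ y, |(Ioi x).indicator (1 : ℝ → ℝ) y| ≤ C := by
    refine ⟨1, fun y => ?_⟩
    by_cases hy : y ∈ Ioi x
    · simp [indicator_of_mem hy]
    · simp [indicator_of_notMem hy]
  have := hord _ hmono hbd
  rwa [integral_indicator_one measurableSet_Ioi, integral_indicator_one measurableSet_Ioi] at this

lemma fstar_set_bdd (ν : Measure ℝ) {M s : ℝ} (hM : ν (Ioi M) = 0) (hs : 0 ≤ s) :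
    BddAbove {x : ℝ | s < (ν (Ioi x)).toReal} := by
  refine ⟨M, fun x hx => ?_⟩
  by_contra hxM
  push_neg at hxM
  have : ν (Ioi x) ≤ ν (Ioi M) := measure_mono (Ioi_subset_Ioi hxM.le)
  rw [hM, le_zero_iff] at this
  simp only [mem_setOf_eq, this, ENNReal.toReal_zero] at hx
  exact absurd hx (not_lt.2 hs)

lemma fstar_set_nonempty (ν : Measure ℝ) [IsProbabilityMeasure ν] {s : ℝ} (hs : s < 1) :
    {x : ℝ | s < (ν (Ioi x)).toReal}.Nonempty := by
  have h1 : Tendsto (fun x => (ν (Ici x)).toReal) atBot (𝓝 1) := by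
    have := tendsto_measure_Ici_atBot ν
    rw [measure_univ] at this
    have := (ENNReal.tendsto_toReal (by norm_num)).comp this
    simpa [Function.comp_def] using this
  have : ∀ᶠ x in atBot, s < (ν (Ici x)).toReal := h1.eventually_const_lt hs
  obtain ⟨x, hx⟩ := this.exists
  refine ⟨x - 1, ?_⟩
  have hsub : Ici x ⊆ Ioi (x - 1) := fun y hy => lt_of_lt_of_le (by linarith : x - 1 < x) hy
  have := measure_mono (μ := ν) hsub
  exact lt_of_lt_of_le hx (ENNReal.toReal_mono (measure_ne_top ν _) this)

lemma fstar_anti (ν : Measure ℝ) [IsProbabilityMeasure ν] {M t : ℝ} (hM : ν (Ioi M) = 0)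
    (ht : t < 1) : AntitoneOn (Fstar ν) (Icc 0 t) := by
  intro s hs s' hs' hss
  apply csSup_le_csSup (fstar_set_bdd ν hM hs.1)
    (fstar_set_nonempty ν (lt_of_le_of_lt hs'.2 ht))
  intro x hx
  exact lt_of_le_of_lt hss hx

lemma fstar_integrable (ν : Measure ℝ) [IsProbabilityMeasure ν] {M t : ℝ} (hM : ν (Ioi M) = 0)
    (ht : t < 1) : IntegrableOn (Fstar ν) (Ioc 0 t) volume :=
  (AntitoneOn.integrableOn_isCompact isCompact_Icc (fstar_anti ν hM ht)).mono_set
    Ioc_subset_Icc_self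

/-- If `ν₁ ≻ ν₂` (stochastic order) for probability measures with supports bounded from
above, then `P(ν₁) ≥ P(ν₂)` on `[0,1)`. -/
theorem stmt4 (ν₁ ν₂ : Measure ℝ) [IsProbabilityMeasure ν₁] [IsProbabilityMeasure ν₂]
    (h₁ : ∃ M : ℝ, ν₁ (Ioi M) = 0) (h₂ : ∃ M : ℝ, ν₂ (Ioi M) = 0)
    (hord : StochLE ν₂ ν₁) :
    ∀ t ∈ Ico (0:ℝ) 1, Pfun ν₂ t ≤ Pfun ν₁ t := by
  rintro t ⟨ht0, ht1⟩
  obtain ⟨M₁, hM₁⟩ := h₁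
  obtain ⟨M₂, hM₂⟩ := h₂
  unfold Pfun
  apply setIntegral_mono_on (fstar_integrable ν₂ hM₂ ht1) (fstar_integrable ν₁ hM₁ ht1)
    measurableSet_Ioc
  rintro s ⟨hs0, hst⟩
  apply csSup_le_csSup (fstar_set_bdd ν₁ hM₁ hs0.le)
    (fstar_set_nonempty ν₂ (lt_of_le_of_lt hst ht1))
  intro x hx
  exact lt_of_lt_of_le hx (surv_le ν₁ ν₂ hord x)
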